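/- Let l₁, …, l_k, h₁, …, h_q ∈ ℝ be such that l₁, …, l_k, h₁, …, h_q together are ℤ-independent, let m₁, …, m_k and n₁, …, n_q be nonzero integers, let A₁, …, A_k ⊆ 𝕋 be arbitrary subsets, and let B₁, …, B_q ⊆ 𝕋 be nonempty subsets. Set W := { ψ ∈ G_Bohr : ψ(l_i / m_i) ∈ A_i for all 1 ≤ i ≤ k and ψ(h_j / n_j) ∈ B_j for all 1 ≤ j ≤ q }. Then { (ψ(l₁), …, ψ(l_k)) : ψ ∈ W } = A₁^{m₁} × … × A_k^{m_k}, where for A ⊆ 𝕋 and m ∈ ℤ one sets A^m := { a^m : a ∈ A } (integer powers in the group 𝕋). -/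

import Mathlib

open Set

/-- Auxiliary: given a ℚ-linearly independent family of reals and arbitrary target
values in `Circle`, there is an additive character taking those values. -/
lemma exists_addChar_of_linearIndependent {ι : Type*} (v : ι → ℝ)
    (hv : LinearIndependent ℚ v) (c : ι → Circle) :
    ∃ ψ : AddChar ℝ Circle, ∀ x, ψ (v x) = c x := by
  -- pick real arguments for the target circle values
  have hc : ∀ x, ∃ r : ℝ, Circle.exp r = c x := fun x => ⟨_, Circle.exp_arg (c x)⟩
  choose t ht using hc
  -- a ℚ-linear map on the span sending `v x` to `t x`
  let b : Module.Basis ι ℚ (Submodule.span ℚ (Set.range v)) := Module.Basis.span hv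
  let f : Submodule.span ℚ (Set.range v) →ₗ[ℚ] ℝ := b.constr ℚ t
  obtain ⟨g, hg⟩ := LinearMap.exists_extend f
  have hgv : ∀ x, g (v x) = t x := by
    intro x
    have h1 : ((b x : Submodule.span ℚ (Set.range v)) : ℝ) = v x := congrArg Subtype.val (Module.Basis.span_apply hv x)
    have h2 : g ((b x : Submodule.span ℚ (Set.range v)) : ℝ) = f (b x) := by
      have := congrArg (fun (φ : Submodule.span ℚ (Set.range v) →ₗ[ℚ] ℝ) => φ (b x)) hg
      simpa using this
    rw [← h1, h2]
    simp [f, Module.Basis.constr_basis]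
  refine ⟨{ toFun := fun r => Circle.exp (g r),
            map_zero_eq_one' := by simp,
            map_add_eq_mul' := fun a b => by simp [map_add, Circle.exp_add] }, ?_⟩
  intro x
  show Circle.exp (g (v x)) = c x
  rw [hgv, ht]

theorem statement6 {k q : ℕ} (l : Fin k → ℝ) (h : Fin q → ℝ)
    (hindep : LinearIndependent ℚ (Sum.elim l h))
    (m : Fin k → ℤ) (hm : ∀ i, m i ≠ 0)
    (n : Fin q → ℤ) (hn : ∀ j, n j ≠ 0)
    (A : Fin k → Set Circle) (B : Fin q → Set Circle) (hB : ∀ j, (B j).Nonempty) :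
    (fun ψ : AddChar ℝ Circle => fun i : Fin k => ψ (l i)) ''
        {ψ : AddChar ℝ Circle |
          (∀ i : Fin k, ψ (l i / (m i : ℝ)) ∈ A i) ∧
          (∀ j : Fin q, ψ (h j / (n j : ℝ)) ∈ B j)}
      = Set.univ.pi (fun i : Fin k => (fun a : Circle => a ^ (m i)) '' A i) := by
  have hml : ∀ i, (m i : ℝ) ≠ 0 := fun i => Int.cast_ne_zero.mpr (hm i)
  have hnl : ∀ j, (n j : ℝ) ≠ 0 := fun j => Int.cast_ne_zero.mpr (hn j)
  have key : ∀ (ψ : AddChar ℝ Circle) (i : Fin k), ψ (l i) = ψ (l i / (m i : ℝ)) ^ (m i) := by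
    intro ψ i
    rw [← AddChar.map_zsmul_eq_zpow]
    congr 1
    rw [zsmul_eq_mul, mul_div_cancel₀ _ (hml i)]
  -- the scaled family is still linearly independent
  set v : Fin k ⊕ Fin q → ℝ := Sum.elim (fun i => l i / (m i : ℝ)) (fun j => h j / (n j : ℝ))
    with hvdef
  have hv : LinearIndependent ℚ v := by
    set w : Fin k ⊕ Fin q → ℚˣ :=
      Sum.elim (fun i => (Units.mk0 ((m i : ℚ)) (by exact_mod_cast hm i))⁻¹)
        (fun j => (Units.mk0 ((n j : ℚ)) (by exact_mod_cast hn j))⁻¹) with hwdef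
    have := hindep.units_smul w
    convert this using 1
    funext x
    cases x with
    | inl i =>
        show l i / (m i : ℝ) = ((w (Sum.inl i) : ℚ) : ℝ) • l i
        simp [hwdef, div_eq_inv_mul, smul_eq_mul]
    | inr j =>
        show h j / (n j : ℝ) = ((w (Sum.inr j) : ℚ) : ℝ) • h j
        simp [hwdef, div_eq_inv_mul, smul_eq_mul]
  ext x
  simp only [Set.mem_image, Set.mem_setOf_eq, Set.mem_pi, Set.mem_univ, forall_true_left]
  constructor
  · rintro ⟨ψ, ⟨hA, hB'⟩, rfl⟩ i
    exact ⟨ψ (l i / (m i : ℝ)), hA i, (key ψ i).symm⟩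
  · intro hx
    have hx' : ∀ i, ∃ a, a ∈ A i ∧ a ^ (m i) = x i := fun i => by
      obtain ⟨a, ha, hax⟩ := hx i; exact ⟨a, ha, hax⟩
    choose a ha hax using hx'
    choose b hb using hB
    obtain ⟨ψ, hψ⟩ := exists_addChar_of_linearIndependent v hv (Sum.elim a b)
    refine ⟨ψ, ⟨fun i => ?_, fun j => ?_⟩, ?_⟩
    · have := hψ (Sum.inl i); simpa [hvdef] using this ▸ ha i
    · have := hψ (Sum.inr j); simpa [hvdef] using this ▸ hb j
    · funext i
      have h1 : ψ (l i / (m i : ℝ)) = a i := hψ (Sum.inl i)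
      rw [key ψ i, h1, hax]
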